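/- If ω₁ and ω₂ are 2-dimensional control maps on the same rectangle and p, q > 0 satisfy 1/p + 1/q ≥ 1, then ω₁^{1/p} · ω₂^{1/q} is also a 2-dimensional control map (i.e., it is superadditive in each variable and vanishes as the corresponding interval degenerates). -/

import Mathlib

open Real Filter

lemma key_holder {α β : ℝ} (hα : 0 < α) (hβ : 0 < β) (hs : 1 ≤ α + β)
    {a b c d : ℝ} (ha : 0 ≤ a) (hb : 0 ≤ b) (hc : 0 ≤ c) (hd : 0 ≤ d) :
    a ^ α * b ^ β + c ^ α * d ^ β ≤ (a + c) ^ α * (b + d) ^ β := by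
  rcases eq_or_lt_of_le (add_nonneg ha hc) with hA | hA
  · obtain ⟨rfl, rfl⟩ : a = 0 ∧ c = 0 := by constructor <;> nlinarith
    simp [Real.zero_rpow hα.ne']
  rcases eq_or_lt_of_le (add_nonneg hb hd) with hB | hB
  · obtain ⟨rfl, rfl⟩ : b = 0 ∧ d = 0 := by constructor <;> nlinarith
    simp [Real.zero_rpow hβ.ne']
  set A := a + c with hAdef
  set B := b + d with hBdef
  set σ := α + β with hσ
  have hσ0 : 0 < σ := by positivity
  -- main pointwise estimate: for x y ∈ [0,1], x^α * y^β ≤ (α/σ) x + (β/σ) y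
  have main : ∀ x y : ℝ, 0 ≤ x → x ≤ 1 → 0 ≤ y → y ≤ 1 →
      x ^ α * y ^ β ≤ (α / σ) * x + (β / σ) * y := by
    intro x y hx hx1 hy hy1
    have h1 : x ^ α * y ^ β = (x ^ (α / σ) * y ^ (β / σ)) ^ σ := by
      rw [Real.mul_rpow (by positivity) (by positivity), ← Real.rpow_mul hx,
        ← Real.rpow_mul hy, div_mul_cancel₀ _ hσ0.ne', div_mul_cancel₀ _ hσ0.ne']
    have hbase0 : 0 ≤ x ^ (α / σ) * y ^ (β / σ) := by positivity
    have hbase1 : x ^ (α / σ) * y ^ (β / σ) ≤ 1 :=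
      mul_le_one₀ (Real.rpow_le_one hx hx1 (by positivity))
        (Real.rpow_nonneg hy _) (Real.rpow_le_one hy hy1 (by positivity))
    have h2 : (x ^ (α / σ) * y ^ (β / σ)) ^ σ ≤ x ^ (α / σ) * y ^ (β / σ) := by
      rcases eq_or_lt_of_le hbase0 with h0 | h0
      · rw [← h0, Real.zero_rpow hσ0.ne']
      · calc (x ^ (α / σ) * y ^ (β / σ)) ^ σ
            ≤ (x ^ (α / σ) * y ^ (β / σ)) ^ (1:ℝ) :=
              Real.rpow_le_rpow_of_exponent_ge h0 hbase1 hs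
          _ = _ := Real.rpow_one _
    have h3 : x ^ (α / σ) * y ^ (β / σ) ≤ (α / σ) * x + (β / σ) * y :=
      Real.geom_mean_le_arith_mean2_weighted (by positivity) (by positivity) hx hy
        (by field_simp; linarith)
    linarith [h1 ▸ le_trans h2 h3]
  have e1 : a ^ α * b ^ β = A ^ α * B ^ β * ((a / A) ^ α * (b / B) ^ β) := by
    rw [Real.div_rpow ha hA.le, Real.div_rpow hb hB.le]
    field_simp
  have e2 : c ^ α * d ^ β = A ^ α * B ^ β * ((c / A) ^ α * (d / B) ^ β) := by
    rw [Real.div_rpow hc hA.le, Real.div_rpow hd hB.le]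
    field_simp
  have m1 := main (a / A) (b / B) (by positivity) (by rw [div_le_one hA]; linarith)
    (by positivity) (by rw [div_le_one hB]; linarith)
  have m2 := main (c / A) (d / B) (by positivity) (by rw [div_le_one hA]; linarith)
    (by positivity) (by rw [div_le_one hB]; linarith)
  have hsum : (α / σ) * (a / A) + (β / σ) * (b / B) + ((α / σ) * (c / A) + (β / σ) * (d / B)) = 1 := by
    field_simp
    ring
  have hAB : 0 ≤ A ^ α * B ^ β := by positivity
  calc a ^ α * b ^ β + c ^ α * d ^ β
      = A ^ α * B ^ β * ((a / A) ^ α * (b / B) ^ β + (c / A) ^ α * (d / B) ^ β) := by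
        rw [e1, e2]; ring
    _ ≤ A ^ α * B ^ β * 1 := by
        apply mul_le_mul_of_nonneg_left _ hAB
        linarith
    _ = A ^ α * B ^ β := mul_one _

/-- `ω` is a 2-dimensional control map on the rectangles contained in `[0,1]²`:
`ω s t u v` stands for `ω([s,t] × [u,v])`; it is nonnegative, superadditive in each variable
and vanishes as the corresponding interval degenerates. -/
structure IsControl2 (ω : ℝ → ℝ → ℝ → ℝ → ℝ) : Prop where
  nonneg : ∀ s t u v : ℝ, 0 ≤ s → s ≤ t → t ≤ 1 → 0 ≤ u → u ≤ v → v ≤ 1 →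
    0 ≤ ω s t u v
  superadd_fst : ∀ r s t u v : ℝ, 0 ≤ r → r ≤ s → s ≤ t → t ≤ 1 →
    0 ≤ u → u ≤ v → v ≤ 1 →
    ω r s u v + ω s t u v ≤ ω r t u v
  superadd_snd : ∀ u v r s t : ℝ, 0 ≤ u → u ≤ v → v ≤ 1 →
    0 ≤ r → r ≤ s → s ≤ t → t ≤ 1 →
    ω u v r s + ω u v s t ≤ ω u v r t
  vanish_fst : ∀ t u v : ℝ, 0 ≤ t → t ≤ 1 → 0 ≤ u → u ≤ v → v ≤ 1 →
    Tendsto (fun s => ω s t u v) (nhdsWithin t (Set.Iio t)) (nhds 0)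
  vanish_snd : ∀ u v t : ℝ, 0 ≤ u → u ≤ v → v ≤ 1 → 0 ≤ t → t ≤ 1 →
    Tendsto (fun s => ω u v s t) (nhdsWithin t (Set.Iio t)) (nhds 0)

/-- If `ω₁, ω₂` are 2-dimensional control maps on the same rectangle and `p, q > 0` with
`1/p + 1/q ≥ 1`, then `ω₁^{1/p} ω₂^{1/q}` is again a 2-dimensional control map. -/
theorem isControl2_rpow_mul (ω₁ ω₂ : ℝ → ℝ → ℝ → ℝ → ℝ)
    (h₁ : IsControl2 ω₁) (h₂ : IsControl2 ω₂)
    (p q : ℝ) (hp : 0 < p) (hq : 0 < q) (hpq : 1 ≤ 1 / p + 1 / q) :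
    IsControl2 (fun s t u v => ω₁ s t u v ^ (1 / p) * ω₂ s t u v ^ (1 / q)) := by
  have hα : 0 < 1 / p := by positivity
  have hβ : 0 < 1 / q := by positivity
  constructor
  · intro s t u v hs hst ht hu huv hv
    exact mul_nonneg (Real.rpow_nonneg (h₁.nonneg s t u v hs hst ht hu huv hv) _)
      (Real.rpow_nonneg (h₂.nonneg s t u v hs hst ht hu huv hv) _)
  · intro r s t u v hr hrs hst ht1 hu huv hv1
    have n1 := h₁.nonneg r s u v hr hrs (hst.trans ht1) hu huv hv1
    have n2 := h₁.nonneg s t u v (hr.trans hrs) hst ht1 hu huv hv1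
    have n3 := h₂.nonneg r s u v hr hrs (hst.trans ht1) hu huv hv1
    have n4 := h₂.nonneg s t u v (hr.trans hrs) hst ht1 hu huv hv1
    calc ω₁ r s u v ^ (1/p) * ω₂ r s u v ^ (1/q) + ω₁ s t u v ^ (1/p) * ω₂ s t u v ^ (1/q)
        ≤ (ω₁ r s u v + ω₁ s t u v) ^ (1/p) * (ω₂ r s u v + ω₂ s t u v) ^ (1/q) :=
          key_holder hα hβ hpq n1 n3 n2 n4
      _ ≤ ω₁ r t u v ^ (1/p) * ω₂ r t u v ^ (1/q) := by
          apply mul_le_mul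
          · exact Real.rpow_le_rpow (by linarith)
              (h₁.superadd_fst r s t u v hr hrs hst ht1 hu huv hv1) hα.le
          · exact Real.rpow_le_rpow (by linarith)
              (h₂.superadd_fst r s t u v hr hrs hst ht1 hu huv hv1) hβ.le
          · exact Real.rpow_nonneg (by linarith) _
          · exact Real.rpow_nonneg (h₁.nonneg r t u v hr (hrs.trans hst) ht1 hu huv hv1) _
  · intro u v r s t hu huv hv1 hr hrs hst ht1
    have n1 := h₁.nonneg u v r s hu huv hv1 hr hrs (hst.trans ht1)
    have n2 := h₁.nonneg u v s t hu huv hv1 (hr.trans hrs) hst ht1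
    have n3 := h₂.nonneg u v r s hu huv hv1 hr hrs (hst.trans ht1)
    have n4 := h₂.nonneg u v s t hu huv hv1 (hr.trans hrs) hst ht1
    calc ω₁ u v r s ^ (1/p) * ω₂ u v r s ^ (1/q) + ω₁ u v s t ^ (1/p) * ω₂ u v s t ^ (1/q)
        ≤ (ω₁ u v r s + ω₁ u v s t) ^ (1/p) * (ω₂ u v r s + ω₂ u v s t) ^ (1/q) :=
          key_holder hα hβ hpq n1 n3 n2 n4
      _ ≤ ω₁ u v r t ^ (1/p) * ω₂ u v r t ^ (1/q) := by
          apply mul_le_mul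
          · exact Real.rpow_le_rpow (by linarith)
              (h₁.superadd_snd u v r s t hu huv hv1 hr hrs hst ht1) hα.le
          · exact Real.rpow_le_rpow (by linarith)
              (h₂.superadd_snd u v r s t hu huv hv1 hr hrs hst ht1) hβ.le
          · exact Real.rpow_nonneg (by linarith) _
          · exact Real.rpow_nonneg (h₁.nonneg u v r t hu huv hv1 hr (hrs.trans hst) ht1) _
  · intro t u v ht ht1 hu huv hv1
    have t1 := (h₁.vanish_fst t u v ht ht1 hu huv hv1).rpow_const (Or.inr hα.le)
    have t2 := (h₂.vanish_fst t u v ht ht1 hu huv hv1).rpow_const (Or.inr hβ.le)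
    have := t1.mul t2
    rw [Real.zero_rpow hα.ne', zero_mul] at this
    exact this
  · intro u v t hu huv hv1 ht ht1
    have t1 := (h₁.vanish_snd u v t hu huv hv1 ht ht1).rpow_const (Or.inr hα.le)
    have t2 := (h₂.vanish_snd u v t hu huv hv1 ht ht1).rpow_const (Or.inr hβ.le)
    have := t1.mul t2
    rw [Real.zero_rpow hα.ne', zero_mul] at this
    exact this
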